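/- arXiv:2302.01365 — 5 statements merged into one kernel-verified Lean document; each statement's English description precedes it below -/
import Mathlib

section
/- The set S = {p ∈ ℝ³ : 0 ≤ p_k ≤ 1 for k = 1,2,3 and p₁ + p₂ + p₃ = 3/2} is equal to the convex hull (over ℝ) of the six behaviour vectors {v₁, v₂, v₃, v₄, v₅, v₆}. -/
/-- The six extremal behaviour vectors in ℝ³. -/
noncomputable def behaviour : Fin 6 → Fin 3 → ℝ :=
  ![![1, 0, 1/2], ![0, 1, 1/2], ![(1:ℝ)/2, 1, 0],
    ![(1:ℝ)/2, 0, 1], ![0, 1/2, 1], ![1, 1/2, 0]]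

lemma behaviour_zero : behaviour 0 = ![1, 0, 1/2] := rfl
lemma behaviour_one : behaviour 1 = ![0, 1, 1/2] := rfl
lemma behaviour_two : behaviour 2 = ![(1:ℝ)/2, 1, 0] := rfl
lemma behaviour_three : behaviour 3 = ![(1:ℝ)/2, 0, 1] := rfl
lemma behaviour_four : behaviour 4 = ![0, 1/2, 1] := rfl
lemma behaviour_five : behaviour 5 = ![1, 1/2, 0] := rfl

@[simp] lemma vec6_get5 {α : Type*} (a b c d e f : α) : ![a,b,c,d,e,f] 5 = f := rfl

lemma vec3_get2 {α : Type*} (a b c : α) : ![a,b,c] 2 = c := rfl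

/-- The set of behaviours satisfying the zero-sum bias is the convex hull of the six
extremal behaviour vectors. -/
theorem bias_set_eq_convexHull_behaviours :
    {p : Fin 3 → ℝ | (∀ k, 0 ≤ p k ∧ p k ≤ 1) ∧ p 0 + p 1 + p 2 = 3/2} =
      convexHull ℝ (Set.range behaviour) := by
  apply Set.Subset.antisymm
  · intro p hp
    obtain ⟨hk, hsum⟩ := hp
    obtain ⟨h00, h01⟩ := hk 0
    obtain ⟨h10, h11⟩ := hk 1
    obtain ⟨h20, h21⟩ := hk 2
    have key : ∀ (w : Fin 6 → ℝ), (∀ i, 0 ≤ w i) → (∑ i, w i = 1) →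
        p = ∑ i, w i • behaviour i → p ∈ convexHull ℝ (Set.range behaviour) := by
      intro w hw hw1 hpw
      rw [hpw]
      exact (convex_convexHull ℝ _).sum_mem (fun i _ => hw i) hw1
        (fun i _ => subset_convexHull ℝ _ ⟨i, rfl⟩)
    rcases le_total (p 0) (1/2) with hca | hca
    · set t := min (1 - 2 * p 0) (2 - 2 * p 1) with ht
      have ht0 : 0 ≤ t := le_min (by linarith) (by linarith)
      have ht1 : t ≤ 1 - 2 * p 0 := min_le_left _ _
      have ht2 : t ≤ 2 - 2 * p 1 := min_le_right _ _
      have ht3 : 2 * p 2 - 2 * p 0 - 1 ≤ t := by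
        rcases min_cases (1 - 2 * p 0) (2 - 2 * p 1) with ⟨h, _⟩ | ⟨h, _⟩ <;>
          rw [ht, h] <;> linarith
      refine key ![0, 1 - 2 * p 0 - t, p 0 - p 2 + 1/2 + t/2, 1 - p 1 - t/2, t, 0]
        ?_ ?_ ?_
      · intro i
        fin_cases i <;> simp [vec6_get5] <;> linarith
      · simp [Fin.sum_univ_six, vec6_get5]
        linarith
      · funext k
        fin_cases k <;>
          simp [Fin.sum_univ_six, vec6_get5, behaviour_zero, behaviour_one, behaviour_two, behaviour_three, behaviour_four, behaviour_five] <;> ring_nf <;> linarith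
    · set t := min (2 * p 0 - 1) (2 * p 1) with ht
      have ht0 : 0 ≤ t := le_min (by linarith) (by linarith)
      have ht1 : t ≤ 2 * p 0 - 1 := min_le_left _ _
      have ht2 : t ≤ 2 * p 1 := min_le_right _ _
      have ht3 : 2 * p 0 - 2 * p 2 - 1 ≤ t := by
        rcases min_cases (2 * p 0 - 1) (2 * p 1) with ⟨h, _⟩ | ⟨h, _⟩ <;>
          rw [ht, h] <;> linarith
      refine key ![2 * p 0 - 1 - t, 0, p 1 - t/2, p 2 - p 0 + 1/2 + t/2, 0, t]
        ?_ ?_ ?_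
      · intro i
        fin_cases i <;> simp [vec6_get5] <;> linarith
      · simp [Fin.sum_univ_six, vec6_get5]
        linarith
      · funext k
        fin_cases k <;>
          simp [Fin.sum_univ_six, vec6_get5, behaviour_zero, behaviour_one, behaviour_two, behaviour_three, behaviour_four, behaviour_five] <;> ring_nf <;> linarith
  · apply convexHull_min
    · rintro _ ⟨i, rfl⟩
      fin_cases i <;>
        refine ⟨fun k => ?_, by norm_num [behaviour, vec3_get2]⟩ <;>
        fin_cases k <;> norm_num [behaviour]
    · intro x hx y hy a b ha hb hab
      obtain ⟨hxk, hxs⟩ := hx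
      obtain ⟨hyk, hys⟩ := hy
      constructor
      · intro k
        obtain ⟨hx0, hx1⟩ := hxk k
        obtain ⟨hy0, hy1⟩ := hyk k
        constructor
        · have := mul_nonneg ha hx0
          have := mul_nonneg hb hy0
          simp only [Pi.add_apply, Pi.smul_apply, smul_eq_mul]
          linarith
        · simp only [Pi.add_apply, Pi.smul_apply, smul_eq_mul]
          nlinarith
      · simp only [Pi.add_apply, Pi.smul_apply, smul_eq_mul]
        nlinarith
end

section
/- (Noncontextuality inequality.) Let ν be a noncontextual weight assignment with induced behaviours b₁, …, b₆ ∈ ℝ³. Then the first coordinate of b₁ plus the second coordinate of b₃ plus the third coordinate of b₅ is at most 5/2, i.e. b₁(1) + b₃(2) + b₅(3) ≤ 5/2. -/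
/-- Noncontextuality inequality: for any noncontextual weight assignment ν with induced
behaviours `b j = ∑ i, ν j i • behaviour i`, one has `b₁(1) + b₃(2) + b₅(3) ≤ 5/2`. -/
theorem noncontextuality_inequality
    (ν : Fin 6 → Fin 6 → ℝ)
    (hnn : ∀ j i, 0 ≤ ν j i)
    (hsum : ∀ j, ∑ i, ν j i = 1)
    (hequiv : ∀ i, ν 0 i + ν 1 i = ν 2 i + ν 3 i ∧ ν 2 i + ν 3 i = ν 4 i + ν 5 i)
    (b : Fin 6 → Fin 3 → ℝ)
    (hb : ∀ j, b j = ∑ i, ν j i • behaviour i) :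
    b 0 0 + b 2 1 + b 4 2 ≤ 5/2 := by
  have e0 : b 0 0 = ν 0 0 * 1 + ν 0 1 * 0 + ν 0 2 * (1/2) + ν 0 3 * (1/2)
      + ν 0 4 * 0 + ν 0 5 * 1 := by
    have := congrFun (hb 0) 0
    simp only [Fin.sum_univ_six, Pi.add_apply, Pi.smul_apply, smul_eq_mul] at this
    rw [this, show behaviour 0 0 = 1 from rfl, show behaviour 1 0 = 0 from rfl,
      show behaviour 2 0 = 1/2 from rfl, show behaviour 3 0 = 1/2 from rfl,
      show behaviour 4 0 = 0 from rfl, show behaviour 5 0 = 1 from rfl]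
  have e2 : b 2 1 = ν 2 0 * 0 + ν 2 1 * 1 + ν 2 2 * 1 + ν 2 3 * 0
      + ν 2 4 * (1/2) + ν 2 5 * (1/2) := by
    have := congrFun (hb 2) 1
    simp only [Fin.sum_univ_six, Pi.add_apply, Pi.smul_apply, smul_eq_mul] at this
    rw [this, show behaviour 0 1 = 0 from rfl, show behaviour 1 1 = 1 from rfl,
      show behaviour 2 1 = 1 from rfl, show behaviour 3 1 = 0 from rfl,
      show behaviour 4 1 = 1/2 from rfl, show behaviour 5 1 = 1/2 from rfl]
  have e4 : b 4 2 = ν 4 0 * (1/2) + ν 4 1 * (1/2) + ν 4 2 * 0 + ν 4 3 * 1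
      + ν 4 4 * 1 + ν 4 5 * 0 := by
    have := congrFun (hb 4) 2
    simp only [Fin.sum_univ_six, Pi.add_apply, Pi.smul_apply, smul_eq_mul] at this
    rw [this, show behaviour 0 2 = 1/2 from rfl, show behaviour 1 2 = 1/2 from rfl,
      show behaviour 2 2 = 0 from rfl, show behaviour 3 2 = 1 from rfl,
      show behaviour 4 2 = 1 from rfl, show behaviour 5 2 = 0 from rfl]
  have s0 := hsum 0; have s1 := hsum 1; have s2 := hsum 2
  have s3 := hsum 3; have s4 := hsum 4; have s5 := hsum 5
  simp only [Fin.sum_univ_six] at s0 s1 s2 s3 s4 s5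
  have q0 := hequiv 0; have q1 := hequiv 1; have q2 := hequiv 2
  have q3 := hequiv 3; have q4 := hequiv 4; have q5 := hequiv 5
  obtain ⟨q0a, q0b⟩ := q0; obtain ⟨q1a, q1b⟩ := q1; obtain ⟨q2a, q2b⟩ := q2
  obtain ⟨q3a, q3b⟩ := q3; obtain ⟨q4a, q4b⟩ := q4; obtain ⟨q5a, q5b⟩ := q5
  have n00 := hnn 0 0; have n01 := hnn 0 1; have n02 := hnn 0 2
  have n03 := hnn 0 3; have n04 := hnn 0 4; have n05 := hnn 0 5
  have n10 := hnn 1 0; have n11 := hnn 1 1; have n12 := hnn 1 2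
  have n13 := hnn 1 3; have n14 := hnn 1 4; have n15 := hnn 1 5
  have n20 := hnn 2 0; have n21 := hnn 2 1; have n22 := hnn 2 2
  have n23 := hnn 2 3; have n24 := hnn 2 4; have n25 := hnn 2 5
  have n30 := hnn 3 0; have n31 := hnn 3 1; have n32 := hnn 3 2
  have n33 := hnn 3 3; have n34 := hnn 3 4; have n35 := hnn 3 5
  have n40 := hnn 4 0; have n41 := hnn 4 1; have n42 := hnn 4 2
  have n43 := hnn 4 3; have n44 := hnn 4 4; have n45 := hnn 4 5
  have n50 := hnn 5 0; have n51 := hnn 5 1; have n52 := hnn 5 2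
  have n53 := hnn 5 3; have n54 := hnn 5 4; have n55 := hnn 5 5
  rw [e0, e2, e4]
  linarith
end

section
/- (Necessity of contextuality for biased multi-task models, algebraic form.) Let η ∈ [0, 1] and suppose ν is a noncontextual weight assignment with induced behaviours b₁, …, b₆ ∈ ℝ³ such that b₁(1) = b₃(2) = b₅(3) = (1 + η)/2 (these are the corresponding coordinates of the noise-shrunk extremal behaviours u_j(η) = η·v_j + (1 − η)·(1/2, 1/2, 1/2)). Then η ≤ 2/3. Equivalently, for every η > 2/3 no such noncontextual weight assignment exists. -/
/-- Necessity of contextuality for biased multi-task models (algebraic form): if a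
noncontextual weight assignment ν has induced behaviours `b j = ∑ i, ν j i • behaviour i`
with `b₁(1) = b₃(2) = b₅(3) = (1 + η)/2` for some `η ∈ [0, 1]`, then `η ≤ 2/3`. -/
theorem contextuality_necessary_for_bias
    (η : ℝ) (hη0 : 0 ≤ η) (hη1 : η ≤ 1)
    (ν : Fin 6 → Fin 6 → ℝ)
    (hnn : ∀ j i, 0 ≤ ν j i)
    (hsum : ∀ j, ∑ i, ν j i = 1)
    (hequiv : ∀ i, ν 0 i + ν 1 i = ν 2 i + ν 3 i ∧ ν 2 i + ν 3 i = ν 4 i + ν 5 i)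
    (b : Fin 6 → Fin 3 → ℝ)
    (hb : ∀ j, b j = ∑ i, ν j i • behaviour i)
    (h1 : b 0 0 = (1 + η)/2) (h3 : b 2 1 = (1 + η)/2) (h5 : b 4 2 = (1 + η)/2) :
    η ≤ 2/3 := by
  rw [hb] at h1 h3 h5
  simp only [Fin.sum_univ_six, Pi.add_apply, Pi.smul_apply, smul_eq_mul] at h1 h3 h5
  rw [show behaviour 0 0 = 1 from rfl, show behaviour 1 0 = 0 from rfl,
    show behaviour 2 0 = 1/2 from rfl, show behaviour 3 0 = 1/2 from rfl,
    show behaviour 4 0 = 0 from rfl, show behaviour 5 0 = 1 from rfl] at h1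
  rw [show behaviour 0 1 = 0 from rfl, show behaviour 1 1 = 1 from rfl,
    show behaviour 2 1 = 1 from rfl, show behaviour 3 1 = 0 from rfl,
    show behaviour 4 1 = 1/2 from rfl, show behaviour 5 1 = 1/2 from rfl] at h3
  rw [show behaviour 0 2 = 1/2 from rfl, show behaviour 1 2 = 1/2 from rfl,
    show behaviour 2 2 = 0 from rfl, show behaviour 3 2 = 1 from rfl,
    show behaviour 4 2 = 1 from rfl, show behaviour 5 2 = 0 from rfl] at h5
  have s0 := hsum 0; have s1 := hsum 1; have s2 := hsum 2; have s4 := hsum 4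
  simp only [Fin.sum_univ_six] at s0 s1 s2 s4
  have e0 := hequiv 0; have e1 := hequiv 1; have e2 := hequiv 2
  have e3 := hequiv 3; have e4 := hequiv 4; have e5 := hequiv 5
  have n10 := hnn 1 0; have n15 := hnn 1 5
  have n31 := hnn 3 1; have n32 := hnn 3 2
  have n53 := hnn 5 3; have n54 := hnn 5 4
  have n01 := hnn 0 1; have n04 := hnn 0 4
  have n20 := hnn 2 0; have n23 := hnn 2 3
  have n42 := hnn 4 2; have n45 := hnn 4 5
  linarith [e0.1, e0.2, e1.1, e1.2, e2.1, e2.2, e3.1, e3.2, e4.1, e4.2, e5.1, e5.2]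
end

section
/- (Zero-noise impossibility.) There exists no noncontextual weight assignment ν whose induced behaviours satisfy b₁(1) = 1, b₃(2) = 1 and b₅(3) = 1; in particular no noncontextual weight assignment reproduces the extremal behaviours b₁ = v₁, b₃ = v₃ and b₅ = v₅ exactly. -/
@[simp] private lemma cons_val_five {α : Type*} {m : ℕ} (x : α)
    (u : Fin m.succ.succ.succ.succ.succ → α) : Matrix.vecCons x u 5 = u 4 := rfl

/-- Zero-noise impossibility: there is no noncontextual weight assignment whose induced
behaviours `b j = ∑ i, ν j i • behaviour i` satisfy `b₁(1) = 1`, `b₃(2) = 1`, `b₅(3) = 1`. -/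
theorem no_noncontextual_model_zero_noise :
    ¬ ∃ ν : Fin 6 → Fin 6 → ℝ,
        (∀ j i, 0 ≤ ν j i) ∧
        (∀ j, ∑ i, ν j i = 1) ∧
        (∀ i, ν 0 i + ν 1 i = ν 2 i + ν 3 i ∧ ν 2 i + ν 3 i = ν 4 i + ν 5 i) ∧
        (∑ i, ν 0 i • behaviour i) 0 = 1 ∧
        (∑ i, ν 2 i • behaviour i) 1 = 1 ∧
        (∑ i, ν 4 i • behaviour i) 2 = 1 := by
  rintro ⟨ν, hpos, hsum, hcons, h1, h2, h3⟩
  have s0 := hsum 0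
  have s1 := hsum 1
  have s2 := hsum 2
  have s3 := hsum 3
  have s4 := hsum 4
  have s5 := hsum 5
  have c0 := hcons 0
  have c1 := hcons 1
  have c2 := hcons 2
  have c3 := hcons 3
  have c4 := hcons 4
  have c5 := hcons 5
  simp only [Fin.sum_univ_six, behaviour, Pi.smul_apply, smul_eq_mul, Pi.add_apply,
    Matrix.cons_val_zero, Matrix.cons_val_one, Matrix.head_cons, Matrix.cons_val_two,
    Matrix.tail_cons, Matrix.cons_val_three, Matrix.cons_val_four, cons_val_five,
    Matrix.head_fin_const] at h1 h2 h3
  simp only [Fin.sum_univ_six] at s0 s1 s2 s3 s4 s5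
  obtain ⟨c0a, c0b⟩ := c0
  obtain ⟨c1a, c1b⟩ := c1
  obtain ⟨c2a, c2b⟩ := c2
  obtain ⟨c3a, c3b⟩ := c3
  obtain ⟨c4a, c4b⟩ := c4
  obtain ⟨c5a, c5b⟩ := c5
  linarith [hpos 0 0, hpos 0 1, hpos 0 2, hpos 0 3, hpos 0 4, hpos 0 5, hpos 1 0, hpos 1 1, hpos 1 2, hpos 1 3, hpos 1 4, hpos 1 5, hpos 2 0, hpos 2 1, hpos 2 2, hpos 2 3, hpos 2 4, hpos 2 5, hpos 3 0, hpos 3 1, hpos 3 2, hpos 3 3, hpos 3 4, hpos 3 5, hpos 4 0, hpos 4 1, hpos 4 2, hpos 4 3, hpos 4 4, hpos 4 5, hpos 5 0, hpos 5 1, hpos 5 2, hpos 5 3, hpos 5 4, hpos 5 5]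
end

section
/- Let ν be a noncontextual weight assignment. Then ν(3,1) + ν(1,2) + ν(1,3) + ν(3,6) − (ν(5,1) + ν(5,2) + ν(5,3) + ν(5,6)) ≤ 1. -/
/-- Key intermediate inequality for the noncontextuality inequality: for any
noncontextual weight assignment ν,
`ν(3,1) + ν(1,2) + ν(1,3) + ν(3,6) − (ν(5,1) + ν(5,2) + ν(5,3) + ν(5,6)) ≤ 1`
(indices here are 1-based; below they are 0-based). -/
theorem intermediate_noncontextual_inequality
    (ν : Fin 6 → Fin 6 → ℝ)
    (hnn : ∀ j i, 0 ≤ ν j i)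
    (hsum : ∀ j, ∑ i, ν j i = 1)
    (hequiv : ∀ i, ν 0 i + ν 1 i = ν 2 i + ν 3 i ∧ ν 2 i + ν 3 i = ν 4 i + ν 5 i) :
    ν 2 0 + ν 0 1 + ν 0 2 + ν 2 5 - (ν 4 0 + ν 4 1 + ν 4 2 + ν 4 5) ≤ 1 := by
  have h5 := hsum 5
  rw [Fin.sum_univ_six] at h5
  obtain ⟨a0, b0⟩ := hequiv 0
  obtain ⟨a1, b1⟩ := hequiv 1
  obtain ⟨a2, b2⟩ := hequiv 2
  obtain ⟨a5, b5⟩ := hequiv 5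
  have := hnn 3 0; have := hnn 1 1; have := hnn 1 2; have := hnn 3 5
  have := hnn 5 3; have := hnn 5 4
  linarith
end
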